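/- arXiv:1303.3949 — 5 statements merged into one kernel-verified Lean document; each statement's English description precedes it below -/
import Mathlib

section
/- Let Γ ≤ Λ be countable groups with Γ commensurated by Λ. The relative profinite completion Λ//Γ (the closure of τ(Λ) in Sym(Λ/Γ) with the topology of pointwise convergence) is discrete if and only if there exists a finite index subgroup Γ₀ ≤ Γ with Γ₀ normal in Λ. -/
open scoped Pointwise Topology

/-- The topology of pointwise convergence on the symmetric group of a (discrete) set `X`,
induced from the product topology on `(X → X) × (X → X)` via `g ↦ (g, g⁻¹)`. -/
noncomputable def permPointwiseTopology (X : Type*) : TopologicalSpace (Equiv.Perm X) :=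
  letI : TopologicalSpace X := ⊥
  TopologicalSpace.induced
    (fun g : Equiv.Perm X => ((g : X → X), (g.symm : X → X))) inferInstance


section PermAux

variable {X : Type*}

theorem permPT_isOpen_fix (x y : X) :
    IsOpen[permPointwiseTopology X] {g : Equiv.Perm X | g x = y} := by
  letI : TopologicalSpace X := ⊥
  haveI : DiscreteTopology X := ⟨rfl⟩
  letI t : TopologicalSpace (Equiv.Perm X) := permPointwiseTopology X
  have he : Continuous (fun g : Equiv.Perm X => ((g : X → X), (g.symm : X → X))) :=
    continuous_induced_dom
  have hc : Continuous (fun g : Equiv.Perm X => g x) :=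
    (continuous_apply x).comp (continuous_fst.comp he)
  exact hc.isOpen_preimage {y} (isOpen_discrete _)

theorem permPT_topologicalGroup (X : Type*) :
    @IsTopologicalGroup (Equiv.Perm X) (permPointwiseTopology X) _ := by
  letI : TopologicalSpace X := ⊥
  haveI : DiscreteTopology X := ⟨rfl⟩
  letI t : TopologicalSpace (Equiv.Perm X) := permPointwiseTopology X
  have he : Continuous (fun g : Equiv.Perm X => ((g : X → X), (g.symm : X → X))) :=
    continuous_induced_dom
  refine { continuous_mul := ?_, continuous_inv := ?_ }
  · apply continuous_induced_rng.mpr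
    refine Continuous.prodMk ?_ ?_
    · apply continuous_pi; intro x
      apply continuous_discrete_rng.mpr
      intro y
      have : (fun p : Equiv.Perm X × Equiv.Perm X => (p.1 * p.2) x) ⁻¹' {y}
          = ⋃ z : X, {g : Equiv.Perm X | g z = y} ×ˢ {h : Equiv.Perm X | h x = z} := by
        ext p
        simp only [Set.mem_preimage, Set.mem_singleton_iff, Set.mem_iUnion, Set.mem_prod,
          Set.mem_setOf_eq, Equiv.Perm.mul_apply]
        exact ⟨fun h => ⟨p.2 x, h, rfl⟩, fun ⟨z, h1, h2⟩ => by rw [h2]; exact h1⟩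
      rw [this]
      exact isOpen_iUnion fun z => (permPT_isOpen_fix z y).prod (permPT_isOpen_fix x z)
    · have key : ∀ (f g : Equiv.Perm X) (x : X), (f * g).symm x = g.symm (f.symm x) := by
        intro f g x
        rw [← Equiv.Perm.inv_def, mul_inv_rev, Equiv.Perm.mul_apply, Equiv.Perm.inv_def,
          Equiv.Perm.inv_def]
      apply continuous_pi; intro x
      apply continuous_discrete_rng.mpr
      intro y
      have : (fun p : Equiv.Perm X × Equiv.Perm X => (p.1 * p.2).symm x) ⁻¹' {y}
          = ⋃ z : X, {g : Equiv.Perm X | g z = x} ×ˢ {h : Equiv.Perm X | h y = z} := by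
        ext p
        simp only [Set.mem_preimage, Set.mem_singleton_iff, Set.mem_iUnion, Set.mem_prod,
          Set.mem_setOf_eq]
        constructor
        · intro h
          refine ⟨p.1.symm x, Equiv.apply_symm_apply _ _, ?_⟩
          rw [← h, key, Equiv.apply_symm_apply]
        · rintro ⟨z, h1, h2⟩
          rw [key, ← h1, Equiv.symm_apply_apply, ← h2, Equiv.symm_apply_apply]
      rw [this]
      exact isOpen_iUnion fun z => (permPT_isOpen_fix z x).prod (permPT_isOpen_fix y z)
  · apply continuous_induced_rng.mpr
    have : ((fun g : Equiv.Perm X => ((g : X → X), (g.symm : X → X)))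
        ∘ fun g : Equiv.Perm X => g⁻¹) = Prod.swap ∘
        (fun g : Equiv.Perm X => ((g : X → X), (g.symm : X → X))) := rfl
    rw [this]
    exact continuous_swap.comp he

end PermAux

theorem permPT_t2 (X : Type*) : @T2Space (Equiv.Perm X) (permPointwiseTopology X) := by
  letI : TopologicalSpace X := ⊥
  haveI : DiscreteTopology X := ⟨rfl⟩
  letI t : TopologicalSpace (Equiv.Perm X) := permPointwiseTopology X
  have he : Topology.IsEmbedding
      (fun g : Equiv.Perm X => ((g : X → X), (g.symm : X → X))) := by
    refine ⟨⟨rfl⟩, fun g h hgh => ?_⟩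
    exact Equiv.coe_fn_injective (congrArg Prod.fst hgh)
  exact he.t2Space


/-- If `Γ` is a commensurated subgroup of a countable group `Λ`, the relative profinite
completion `Λ//Γ` (the closure of `τ(Λ)` in `Sym(Λ/Γ)` with the topology of pointwise
convergence) is discrete if and only if there is a finite index subgroup `Γ₀ ≤ Γ` which is
normal in `Λ`. -/
theorem relProfiniteCompletion_discrete_iff {Λ : Type*} [Group Λ] [Countable Λ]
    (Γ : Subgroup Λ)
    (hcomm : ∀ l : Λ, Subgroup.Commensurable (Subgroup.map ((MulAut.conj l) : Λ →* Λ) Γ) Γ) :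
    letI : TopologicalSpace (Equiv.Perm (Λ ⧸ Γ)) := permPointwiseTopology (Λ ⧸ Γ)
    let τ : Λ →* Equiv.Perm (Λ ⧸ Γ) := MulAction.toPermHom Λ (Λ ⧸ Γ)
    (DiscreteTopology ↥(closure (Set.range ⇑τ)) ↔
      ∃ Γ₀ : Subgroup Λ, Γ₀ ≤ Γ ∧ Γ₀.relIndex Γ ≠ 0 ∧ Γ₀.Normal) := by
  intro τ
  letI _i : TopologicalSpace (Equiv.Perm (Λ ⧸ Γ)) := permPointwiseTopology (Λ ⧸ Γ)
  haveI : IsTopologicalGroup (Equiv.Perm (Λ ⧸ Γ)) := permPT_topologicalGroup _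
  haveI : T2Space (Equiv.Perm (Λ ⧸ Γ)) := permPT_t2 _
  have hτapp : ∀ l g : Λ, τ l ((g : Λ ⧸ Γ)) = ((l * g : Λ) : Λ ⧸ Γ) := fun l g => rfl
  have hfix : ∀ l g : Λ, τ l ((g : Λ ⧸ Γ)) = ((g : Λ) : Λ ⧸ Γ) ↔ g⁻¹ * l * g ∈ Γ := by
    intro l g
    rw [hτapp, QuotientGroup.eq]
    constructor
    · intro h
      have := inv_mem h
      simpa [mul_assoc] using this
    · intro h
      have := inv_mem h
      simpa [mul_assoc] using this
  have hker_le : τ.ker ≤ Γ := by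
    intro l hl
    have h1 : τ l (((1 : Λ) : Λ ⧸ Γ)) = (((1 : Λ) : Λ) : Λ ⧸ Γ) := by
      rw [MonoidHom.mem_ker.mp hl]; rfl
    simpa using (hfix l 1).mp h1
  have hclosure_sub : ∀ {a b : Equiv.Perm (Λ ⧸ Γ)},
      a ∈ closure (Set.range ⇑τ) → b ∈ closure (Set.range ⇑τ) →
      a⁻¹ * b ∈ closure (Set.range ⇑τ) := by
    have hset : closure (Set.range ⇑τ) = (τ.range.topologicalClosure : Set (Equiv.Perm (Λ ⧸ Γ))) := by
      rw [Subgroup.topologicalClosure_coe, MonoidHom.coe_range]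
    intro a b ha hb
    rw [hset] at ha hb ⊢
    exact mul_mem (inv_mem ha) hb
  constructor
  · -- forward
    intro hdisc
    have h1mem : (1 : Equiv.Perm (Λ ⧸ Γ)) ∈ closure (Set.range ⇑τ) :=
      subset_closure ⟨1, map_one τ⟩
    have hopen : IsOpen {(⟨1, h1mem⟩ : ↥(closure (Set.range ⇑τ)))} := isOpen_discrete _
    obtain ⟨U, hUopen, hUeq⟩ := Topology.IsInducing.subtypeVal.isOpen_iff.mp hopen
    have h1U : (1 : Equiv.Perm (Λ ⧸ Γ)) ∈ U := by
      have : (⟨1, h1mem⟩ : ↥(closure (Set.range ⇑τ))) ∈ Subtype.val ⁻¹' U := by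
        rw [hUeq]; rfl
      exact this
    letI : TopologicalSpace (Λ ⧸ Γ) := ⊥
    haveI : DiscreteTopology (Λ ⧸ Γ) := ⟨rfl⟩
    obtain ⟨V, hVopen, hVeq⟩ := isOpen_induced_iff.mp hUopen
    have h1V : ((((1 : Equiv.Perm (Λ ⧸ Γ)) : (Λ ⧸ Γ) → (Λ ⧸ Γ)),
        ((1 : Equiv.Perm (Λ ⧸ Γ)).symm : (Λ ⧸ Γ) → (Λ ⧸ Γ)))) ∈ V := by
      have h := h1U
      rw [← hVeq] at h
      exact h
    obtain ⟨V₁, V₂, hV₁, hV₂, h1V₁, h1V₂, hVsub⟩ := (isOpen_prod_iff.mp hVopen) _ _ h1V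
    obtain ⟨I₁, u₁, hu₁, hpi₁⟩ := (isOpen_pi_iff.mp hV₁) _ h1V₁
    obtain ⟨I₂, u₂, hu₂, hpi₂⟩ := (isOpen_pi_iff.mp hV₂) _ h1V₂
    classical
    set F : Finset (Λ ⧸ Γ) := I₁ ∪ I₂ with hF
    have hkey : ∀ l : Λ, (∀ x ∈ F, τ l x = x) → τ l = 1 := by
      intro l hl
      have hinv : ∀ x ∈ F, (τ l).symm x = x := by
        intro x hx
        rw [Equiv.symm_apply_eq]; exact (hl x hx).symm
      have hmem : (((τ l : (Λ ⧸ Γ) → (Λ ⧸ Γ)), ((τ l).symm : (Λ ⧸ Γ) → (Λ ⧸ Γ)))) ∈ V := by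
        apply hVsub
        constructor
        · apply hpi₁
          intro a ha
          have h2 := (hu₁ a ha).2
          show (τ l) a ∈ u₁ a
          rw [show (τ l) a = a from hl a (Finset.mem_union_left _ ha)]
          simpa using h2
        · apply hpi₂
          intro a ha
          have h2 := (hu₂ a ha).2
          show (τ l).symm a ∈ u₂ a
          rw [show (τ l).symm a = a from hinv a (Finset.mem_union_right _ ha)]
          exact h2
      have hU' : τ l ∈ U := by rw [← hVeq]; exact hmem
      have : (⟨τ l, subset_closure ⟨l, rfl⟩⟩ : ↥(closure (Set.range ⇑τ)))
          ∈ Subtype.val ⁻¹' U := hU'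
      rw [hUeq] at this
      exact congrArg Subtype.val this
    -- the kernel works
    refine ⟨τ.ker, hker_le, ?_, τ.normal_ker⟩
    set C : Λ ⧸ Γ → Subgroup Λ :=
      fun x => Subgroup.map ((MulAut.conj x.out) : Λ →* Λ) Γ with hC
    have hKle : (⨅ x : {y // y ∈ F}, C x.1) ≤ τ.ker := by
      intro l hl
      rw [MonoidHom.mem_ker]
      apply hkey
      intro x hx
      have hlx : l ∈ C x := by
        have := Subgroup.mem_iInf.mp hl ⟨x, hx⟩
        exact this
      obtain ⟨γ, hγ, hγl⟩ := hlx
      have hx' : x.out⁻¹ * l * x.out = γ := by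
        have hl2 : x.out * γ * x.out⁻¹ = l := by
          simpa [MulAut.conj_apply] using hγl
        rw [← hl2]
        group
      have hmem2 : τ l ((x.out : Λ ⧸ Γ)) = ((x.out : Λ) : Λ ⧸ Γ) :=
        (hfix l x.out).mpr (by rw [hx']; exact hγ)
      rwa [QuotientGroup.out_eq'] at hmem2
    have hKrel : (⨅ x : {y // y ∈ F}, C x.1).relIndex Γ ≠ 0 := by
      apply Subgroup.relIndex_iInf_ne_zero
      intro i
      exact (hcomm i.1.out).1
    have hdvd := Subgroup.relIndex_dvd_of_le_left Γ hKle
    intro h0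
    rw [h0] at hdvd
    exact hKrel (Nat.eq_zero_of_zero_dvd hdvd)
  · -- backward
    rintro ⟨Γ₀, hΓ₀le, hΓ₀rel, hΓ₀norm⟩
    have hΓ₀ker : Γ₀ ≤ τ.ker := by
      intro g hg
      rw [MonoidHom.mem_ker]
      ext q
      induction q using QuotientGroup.induction_on with
      | H a => 
        rw [show ((1 : Equiv.Perm (Λ ⧸ Γ)) ((a : Λ ⧸ Γ))) = ((a : Λ) : Λ ⧸ Γ) from rfl]
        rw [hfix]
        exact hΓ₀le (by simpa using hΓ₀norm.conj_mem g hg a⁻¹)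
    haveI : Finite (Γ ⧸ Γ₀.subgroupOf Γ) := by
      apply Nat.finite_of_card_ne_zero
      exact hΓ₀rel
    -- image of Γ under τ is finite
    set φ : Γ →* Equiv.Perm (Λ ⧸ Γ) := τ.comp Γ.subtype with hφ
    have hφker : Γ₀.subgroupOf Γ ≤ φ.ker := by
      intro γ hγ
      rw [MonoidHom.mem_ker]
      exact hΓ₀ker (Subgroup.mem_subgroupOf.mp hγ)
    set ψ := QuotientGroup.lift (Γ₀.subgroupOf Γ) φ hφker with hψ
    have hSfin : (Set.range fun γ : Γ => τ γ).Finite := by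
      have : (Set.range fun γ : Γ => τ γ) = Set.range ψ := by
        ext σ
        constructor
        · rintro ⟨γ, rfl⟩
          exact ⟨QuotientGroup.mk γ, rfl⟩
        · rintro ⟨q, rfl⟩
          obtain ⟨γ, rfl⟩ := QuotientGroup.mk_surjective q
          exact ⟨γ, rfl⟩
      rw [this]
      exact Set.finite_range ψ
    set S : Set (Equiv.Perm (Λ ⧸ Γ)) := Set.range fun γ : Γ => τ γ with hS
    set U₁ : Set (Equiv.Perm (Λ ⧸ Γ)) :=
      {g : Equiv.Perm (Λ ⧸ Γ) | g (((1 : Λ) : Λ ⧸ Γ)) = (((1 : Λ) : Λ) : Λ ⧸ Γ)} with hU₁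
    have hU₁open : IsOpen U₁ := permPT_isOpen_fix _ _
    have hU₁range : U₁ ∩ Set.range ⇑τ ⊆ S := by
      rintro σ ⟨hσ1, l, rfl⟩
      have hlΓ : l ∈ Γ := by simpa using (hfix l 1).mp hσ1
      exact ⟨⟨l, hlΓ⟩, rfl⟩
    have hsub : closure (Set.range ⇑τ) ∩ U₁ ⊆ S := by
      intro σ hσ
      have h1 : σ ∈ closure (U₁ ∩ Set.range ⇑τ) :=
        hU₁open.inter_closure ⟨hσ.2, hσ.1⟩
      have h2 : σ ∈ closure S := closure_mono hU₁range h1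
      rwa [hSfin.isClosed.closure_eq] at h2
    set W : Set (Equiv.Perm (Λ ⧸ Γ)) := U₁ \ (S \ {1}) with hW
    have hWopen : IsOpen W := hU₁open.sdiff ((hSfin.diff (t := _)).isClosed)
    have h1W : (1 : Equiv.Perm (Λ ⧸ Γ)) ∈ W := by
      refine ⟨rfl, fun h => h.2 rfl⟩
    have hWint : ∀ σ ∈ closure (Set.range ⇑τ), σ ∈ W → σ = 1 := by
      intro σ hσc hσW
      by_contra hne
      exact hσW.2 ⟨hsub ⟨hσc, hσW.1⟩, hne⟩
    apply discreteTopology_iff_isOpen_singleton.mpr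
    rintro ⟨σ, hσ⟩
    apply isOpen_induced_iff.mpr
    refine ⟨(fun g => σ⁻¹ * g) ⁻¹' W, hWopen.preimage (continuous_mul_left σ⁻¹), ?_⟩
    ext ⟨g, hg⟩
    simp only [Set.mem_preimage, Set.mem_singleton_iff]
    constructor
    · intro hgW
      have : σ⁻¹ * g = 1 := hWint _ (hclosure_sub hσ hg) hgW
      have hgσ : g = σ := by
        rw [← one_mul g, ← mul_inv_cancel σ, mul_assoc, this, mul_one]
      exact Subtype.ext hgσ
    · intro h
      have : g = σ := congrArg Subtype.val h
      subst this
      simpa using h1W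
end

section
/- Let π : (X, ν) → (Y, η) and φ : (Y, η) → (Z, ρ) be measure-preserving maps of standard probability spaces with disintegrations D_π of ν over η and D_φ of η over ρ. Then for almost every z ∈ Z, the pushforward π_*D_{φ∘π}(z) equals D_φ(z), and D_{φ∘π}(z) = ∫_Y D_π(y) dD_φ(z)(y). -/
open MeasureTheory
open scoped ProbabilityTheory

section Aux

variable {Z W : Type*} [MeasurableSpace Z] [MeasurableSpace W]

/-- If `K` is a measurable family of probability measures on `W`, a.e. supported on the fibers
of `f`, then the pushforward of `ρ.bind K` under `w ↦ (f w, w)` is the composition product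
`ρ ⊗ₘ K`. -/
lemma bind_map_eq_compProd (ρ : Measure Z) [IsProbabilityMeasure ρ]
    (f : W → Z) (hf : Measurable f)
    (K : Z → Measure W) (hKm : Measurable K) (hKp : ∀ z, IsProbabilityMeasure (K z))
    (hKs : ∀ᵐ z ∂ρ, K z {w | f w ≠ z} = 0) :
    (ρ.bind K).map (fun w => (f w, w)) = ρ ⊗ₘ (⟨K, hKm⟩ : ProbabilityTheory.Kernel Z W) := by
  haveI : ProbabilityTheory.IsMarkovKernel (⟨K, hKm⟩ : ProbabilityTheory.Kernel Z W) := ⟨hKp⟩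
  have hg : Measurable (fun w => (f w, w)) := hf.prodMk measurable_id
  haveI : IsProbabilityMeasure (ρ.bind K) := by
    constructor
    rw [Measure.bind_apply MeasurableSet.univ hKm.aemeasurable]
    simp [measure_univ]
  refine ext_of_generate_finite _ generateFrom_prod.symm isPiSystem_prod ?_ ?_
  · rintro _ ⟨s, hs, t, ht, rfl⟩
    simp only [Set.mem_setOf_eq] at hs ht
    rw [Measure.map_apply hg (hs.prod ht), Measure.compProd_apply_prod hs ht]
    have hpre : (fun w => (f w, w)) ⁻¹' (s ×ˢ t) = f ⁻¹' s ∩ t := by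
      ext w; simp [Set.mem_prod]
    rw [hpre, Measure.bind_apply ((hf hs).inter ht) hKm.aemeasurable, ← lintegral_indicator hs]
    refine lintegral_congr_ae ?_
    filter_upwards [hKs] with z hz
    by_cases hzs : z ∈ s
    · rw [Set.indicator_of_mem hzs]
      refine le_antisymm (measure_mono Set.inter_subset_right) ?_
      have hsub : t ⊆ (f ⁻¹' s ∩ t) ∪ {w | f w ≠ z} := by
        intro w hw
        by_cases hws : f w ∈ s
        · exact Or.inl ⟨hws, hw⟩
        · exact Or.inr fun h => hws (h ▸ hzs)
      calc K z t ≤ K z ((f ⁻¹' s ∩ t) ∪ {w | f w ≠ z}) := measure_mono hsub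
        _ ≤ K z (f ⁻¹' s ∩ t) + K z {w | f w ≠ z} := measure_union_le _ _
        _ = K z (f ⁻¹' s ∩ t) := by rw [hz, add_zero]
    · rw [Set.indicator_of_notMem hzs]
      have hsub : f ⁻¹' s ∩ t ⊆ {w | f w ≠ z} := by
        rintro w ⟨hws, -⟩ h
        exact hzs (h ▸ hws)
      exact le_antisymm (le_trans (measure_mono hsub) hz.le) (zero_le)
  · rw [Measure.map_apply hg MeasurableSet.univ]
    simp

/-- Uniqueness of disintegrations: two measurable families of probability measures supported
on the fibers of `f` binding to the same measure agree a.e. -/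
lemma disint_unique [StandardBorelSpace W] [Nonempty W]
    (ρ : Measure Z) [IsProbabilityMeasure ρ] (f : W → Z) (hf : Measurable f)
    (K₁ K₂ : Z → Measure W) (h1m : Measurable K₁) (h2m : Measurable K₂)
    (h1p : ∀ z, IsProbabilityMeasure (K₁ z)) (h2p : ∀ z, IsProbabilityMeasure (K₂ z))
    (h1s : ∀ᵐ z ∂ρ, K₁ z {w | f w ≠ z} = 0) (h2s : ∀ᵐ z ∂ρ, K₂ z {w | f w ≠ z} = 0)
    (hb : ρ.bind K₁ = ρ.bind K₂) :
    ∀ᵐ z ∂ρ, K₁ z = K₂ z := by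
  set κ₁ : ProbabilityTheory.Kernel Z W := ⟨K₁, h1m⟩
  set κ₂ : ProbabilityTheory.Kernel Z W := ⟨K₂, h2m⟩
  haveI : ProbabilityTheory.IsMarkovKernel κ₁ := ⟨h1p⟩
  haveI : ProbabilityTheory.IsMarkovKernel κ₂ := ⟨h2p⟩
  set μ : Measure (Z × W) := (ρ.bind K₁).map (fun w => (f w, w)) with hμ
  have hμ1 : μ = ρ ⊗ₘ κ₁ := bind_map_eq_compProd ρ f hf K₁ h1m h1p h1s
  have hμ2 : μ = ρ ⊗ₘ κ₂ := by
    rw [hμ, hb]; exact bind_map_eq_compProd ρ f hf K₂ h2m h2p h2s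
  haveI : IsFiniteMeasure μ := by
    rw [hμ1]; infer_instance
  have hfst : μ.fst = ρ := by rw [hμ1, Measure.fst_compProd]
  have h1 : ∀ᵐ z ∂μ.fst, κ₁ z = μ.condKernel z :=
    ProbabilityTheory.eq_condKernel_of_measure_eq_compProd κ₁ (by rw [hfst, ← hμ1])
  have h2 : ∀ᵐ z ∂μ.fst, κ₂ z = μ.condKernel z :=
    ProbabilityTheory.eq_condKernel_of_measure_eq_compProd κ₂ (by rw [hfst, ← hμ2])
  rw [hfst] at h1 h2
  filter_upwards [h1, h2] with z hz1 hz2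
  exact hz1.trans hz2.symm

end Aux

/-- Composition of disintegrations: if `π : (X,ν) → (Y,η)` and `φ : (Y,η) → (Z,ρ)` are
measure-preserving maps of standard probability spaces with disintegrations `Dπ`, `Dφ` and
`Dφπ` (of `ν` over `ρ` via `φ ∘ π`), then for a.e. `z`, `π_* Dφπ(z) = Dφ(z)` and
`Dφπ(z) = ∫_Y Dπ(y) dDφ(z)(y)`. -/
theorem disintegration_comp {X Y Z : Type*}
    [MeasurableSpace X] [MeasurableSpace Y] [MeasurableSpace Z]
    [StandardBorelSpace X] [StandardBorelSpace Y] [StandardBorelSpace Z]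
    (ν : Measure X) (η : Measure Y) (ρ : Measure Z)
    [IsProbabilityMeasure ν] [IsProbabilityMeasure η] [IsProbabilityMeasure ρ]
    (π : X → Y) (φ : Y → Z) (hπ : Measurable π) (hφ : Measurable φ)
    (hπν : ν.map π = η) (hφη : η.map φ = ρ)
    (Dπ : Y → Measure X) (Dφ : Z → Measure Y) (Dφπ : Z → Measure X)
    (hDπm : Measurable Dπ) (hDφm : Measurable Dφ) (hDφπm : Measurable Dφπ)
    (hDπp : ∀ y, IsProbabilityMeasure (Dπ y)) (hDφp : ∀ z, IsProbabilityMeasure (Dφ z))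
    (hDφπp : ∀ z, IsProbabilityMeasure (Dφπ z))
    (hDπs : ∀ᵐ y ∂η, Dπ y {x | π x ≠ y} = 0)
    (hDφs : ∀ᵐ z ∂ρ, Dφ z {y | φ y ≠ z} = 0)
    (hDφπs : ∀ᵐ z ∂ρ, Dφπ z {x | φ (π x) ≠ z} = 0)
    (hDπb : η.bind Dπ = ν) (hDφb : ρ.bind Dφ = η) (hDφπb : ρ.bind Dφπ = ν) :
    ∀ᵐ z ∂ρ, (Dφπ z).map π = Dφ z ∧ Dφπ z = (Dφ z).bind Dπ := by
  haveI : Nonempty X := by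
    by_contra h
    rw [not_nonempty_iff] at h
    have h1 : ν Set.univ = 1 := measure_univ
    rw [Set.univ_eq_empty_iff.mpr h] at h1
    simp at h1
  haveI : Nonempty Y := Nonempty.map π ‹Nonempty X›
  -- First part: `fun z => (Dφπ z).map π` and `Dφ` are both disintegrations of `η` over `ρ`.
  have hA : ∀ᵐ z ∂ρ, (Dφπ z).map π = Dφ z := by
    refine disint_unique ρ φ hφ (fun z => (Dφπ z).map π) Dφ
      ((Measure.measurable_map π hπ).comp hDφπm) hDφm
      (fun z => Measure.isProbabilityMeasure_map hπ.aemeasurable) hDφp ?_ hDφs ?_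
    · filter_upwards [hDφπs] with z hz
      have hms : MeasurableSet {y | φ y ≠ z} := (hφ (measurableSet_singleton z)).compl
      rw [Measure.map_apply hπ hms]
      exact hz
    · ext s hs
      have hm2 : Measurable (fun z => (Dφπ z).map π) := (Measure.measurable_map π hπ).comp hDφπm
      rw [Measure.bind_apply hs hm2.aemeasurable, hDφb]
      have h1 : ∀ z, ((Dφπ z).map π) s = Dφπ z (π ⁻¹' s) := fun z => Measure.map_apply hπ hs
      simp_rw [h1]
      rw [← Measure.bind_apply (hπ hs) hDφπm.aemeasurable, hDφπb, ← hπν, Measure.map_apply hπ hs]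
  -- Second part: `Dφπ` and `fun z => (Dφ z).bind Dπ` are both disintegrations of `ν` over `ρ`.
  have hB : ∀ᵐ z ∂ρ, Dφπ z = (Dφ z).bind Dπ := by
    -- measurability of the fiber condition for `Dπ`
    letI := upgradeStandardBorel Y
    have hsdiag : MeasurableSet {p : Y × X | π p.2 ≠ p.1} :=
      (MeasureTheory.StronglyMeasurable.measurableSet_eq_fun
        (hπ.comp measurable_snd).stronglyMeasurable measurable_fst.stronglyMeasurable).compl
    haveI : ProbabilityTheory.IsMarkovKernel (⟨Dπ, hDπm⟩ : ProbabilityTheory.Kernel Y X) := ⟨hDπp⟩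
    have hgm : Measurable (fun y => Dπ y {x | π x ≠ y}) := by
      have := ProbabilityTheory.Kernel.measurable_kernel_prodMk_left
        (κ := (⟨Dπ, hDπm⟩ : ProbabilityTheory.Kernel Y X)) hsdiag
      exact this
    set N : Set Y := {y | Dπ y {x | π x ≠ y} ≠ 0} with hN
    have hNm : MeasurableSet N := (hgm (measurableSet_singleton 0)).compl
    have hNnull : η N = 0 := ae_iff.mp hDπs
    have hDφN : ∀ᵐ z ∂ρ, Dφ z N = 0 := by
      have h0 : ∫⁻ z, Dφ z N ∂ρ = 0 := by
        rw [← Measure.bind_apply hNm hDφm.aemeasurable, hDφb, hNnull]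
      have hmc : Measurable (fun z => Dφ z N) := (Measure.measurable_coe hNm).comp hDφm
      exact (lintegral_eq_zero_iff hmc).mp h0
    have hsupp : ∀ᵐ z ∂ρ, (Dφ z).bind Dπ {x | φ (π x) ≠ z} = 0 := by
      filter_upwards [hDφs, hDφN] with z hz1 hz2
      have ht : MeasurableSet {x | φ (π x) ≠ z} :=
        ((hφ.comp hπ) (measurableSet_singleton z)).compl
      have hmc2 : Measurable (fun y => Dπ y {x | φ (π x) ≠ z}) :=
        (Measure.measurable_coe ht).comp hDπm
      rw [Measure.bind_apply ht hDπm.aemeasurable, lintegral_eq_zero_iff hmc2]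
      have hae1 : ∀ᵐ y ∂(Dφ z), φ y = z := by
        rw [ae_iff]; exact hz1
      have hae2 : ∀ᵐ y ∂(Dφ z), Dπ y {x | π x ≠ y} = 0 := by
        rw [ae_iff]
        refine le_antisymm (le_trans (measure_mono ?_) hz2.le) (zero_le)
        intro y hy
        exact hy
      filter_upwards [hae1, hae2] with y hy1 hy2
      refine le_antisymm (le_trans (measure_mono ?_) hy2.le) (zero_le)
      intro x hx h
      exact hx (h ▸ hy1)
    have hbm : Measurable (fun z => (Dφ z).bind Dπ) := (Measure.measurable_bind' hDπm).comp hDφm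
    refine disint_unique ρ (fun x => φ (π x)) (hφ.comp hπ) Dφπ (fun z => (Dφ z).bind Dπ)
      hDφπm hbm hDφπp ?_ hDφπs hsupp ?_
    · intro z
      constructor
      rw [Measure.bind_apply MeasurableSet.univ hDπm.aemeasurable]
      simp [measure_univ]
    · rw [hDφπb, ← Measure.bind_bind hDφm.aemeasurable hDπm.aemeasurable, hDφb, hDπb]
  filter_upwards [hA, hB] with z h1 h2
  exact ⟨h1, h2⟩
end

section
/- Let G act measurably on a standard probability space (X, ν) with ν quasi-invariant, and suppose (X, ν) is contractive: for every measurable B ⊆ X with ν(B) < 1 and every ε > 0 there exists g ∈ G with ν(gB) < ε. Then (X, ν) is contractive if and only if the map f ↦ (g ↦ (gν)(f)) is an isometry from L^∞(X, ν) into L^∞(G, Haar). -/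
open MeasureTheory

/-- Key step: if contractivity holds and `{x | t < f x}` has positive measure, then the
integral of `f` against some translate of `ν` is at least `t - δ`. -/
private lemma key_translate {G X : Type*} [Group G] [MulAction G X] [MeasurableSpace X]
    (ν : Measure X) [IsProbabilityMeasure ν]
    (hmeas : ∀ g : G, Measurable fun x : X => g • x)
    (hcon : ∀ B : Set X, MeasurableSet B → ν B < 1 → ∀ ε : ENNReal, 0 < ε →
        ∃ g : G, ν ((fun x : X => g • x) '' B) < ε)
    (f : X → ℝ) (hf : Measurable f) (C : ℝ) (hC : ∀ x, |f x| ≤ C)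
    (t δ : ℝ) (ht : 0 ≤ t) (hδ : 0 < δ)
    (hpos : 0 < ν {x | t < f x}) :
    ∃ g : G, t - δ ≤ ∫ x, f x ∂(ν.map fun y : X => g • y) := by
  set C' : ℝ := max C 0 with hC'def
  have hC' : ∀ x, |f x| ≤ C' := fun x => (hC x).trans (le_max_left _ _)
  have hC'0 : (0:ℝ) ≤ C' := le_max_right _ _
  set D : ℝ := t + C' + 1 with hDdef
  have hD : 0 < D := by positivity
  set B : Set X := {x | f x ≤ t} with hBdef
  have hB : MeasurableSet B := measurableSet_le hf measurable_const
  have hBc : Bᶜ = {x | t < f x} := by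
    ext x; simp [hBdef, not_le]
  have hB1 : ν B < 1 := by
    have hsum : ν B + ν Bᶜ = 1 := by
      rw [measure_add_measure_compl hB, measure_univ]
    have : ν B < ν B + ν Bᶜ := by
      refine ENNReal.lt_add_right (measure_ne_top ν B) ?_
      rw [hBc]; exact hpos.ne'
    rwa [hsum] at this
  obtain ⟨g, hg⟩ := hcon B hB hB1 (ENNReal.ofReal (δ / D))
    (ENNReal.ofReal_pos.2 (by positivity))
  refine ⟨g⁻¹, ?_⟩
  set μ : Measure X := ν.map fun y : X => g⁻¹ • y with hμdef
  haveI : IsProbabilityMeasure μ := Measure.isProbabilityMeasure_map (hmeas g⁻¹).aemeasurable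
  have hμB : μ B < ENNReal.ofReal (δ / D) := by
    have hset : (fun y : X => g⁻¹ • y) ⁻¹' B = (fun x : X => g • x) '' B := by
      ext x
      constructor
      · intro hx
        exact ⟨g⁻¹ • x, hx, by simp⟩
      · rintro ⟨b, hb, rfl⟩
        simpa using hb
    rw [hμdef, Measure.map_apply (hmeas g⁻¹) hB, hset]
    exact hg
  have hint : Integrable f μ :=
    (memLp_top_of_bound hf.aestronglyMeasurable C'
      (Filter.Eventually.of_forall fun x => by
        simpa [Real.norm_eq_abs] using hC' x)).integrable le_top
  have hsplit : ∫ x, f x ∂μ = ∫ x in B, f x ∂μ + ∫ x in Bᶜ, f x ∂μ :=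
    (integral_add_compl hB hint).symm
  set b : ℝ := (μ B).toReal with hbdef
  have hb0 : 0 ≤ b := ENNReal.toReal_nonneg
  have hb : b ≤ δ / D :=
    ENNReal.toReal_le_of_le_ofReal (by positivity) hμB.le
  have hbc : (μ Bᶜ).toReal = 1 - b := by
    have h1 : μ Bᶜ = 1 - μ B := by
      rw [measure_compl hB (measure_ne_top μ B), measure_univ]
    rw [h1, ENNReal.toReal_sub_of_le prob_le_one (by simp)]
    simp [hbdef]
  have hbound1 : (μ B).toReal • (-C') ≤ ∫ x in B, f x ∂μ := by
    rw [← measureReal_def, ← setIntegral_const]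
    refine setIntegral_mono_on (integrableOn_const (measure_lt_top μ B).ne)
      hint.integrableOn hB ?_
    intro x _
    have := (abs_le.1 (hC' x)).1
    linarith
  have hbound2 : (μ Bᶜ).toReal • t ≤ ∫ x in Bᶜ, f x ∂μ := by
    rw [← measureReal_def, ← setIntegral_const]
    refine setIntegral_mono_on (integrableOn_const (measure_lt_top μ Bᶜ).ne)
      hint.integrableOn hB.compl ?_
    intro x hx
    rw [hBc] at hx
    exact le_of_lt hx
  have hkey : b * (t + C') ≤ δ := by
    have h1 : b * (t + C') ≤ (δ / D) * (t + C') :=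
      mul_le_mul_of_nonneg_right hb (by positivity)
    have h2 : (δ / D) * (t + C') ≤ (δ / D) * D := by
      refine mul_le_mul_of_nonneg_left ?_ (by positivity)
      rw [hDdef]; linarith
    have h3 : (δ / D) * D = δ := div_mul_cancel₀ δ hD.ne'
    linarith
  rw [hsplit]
  have : (μ B).toReal • (-C') + (μ Bᶜ).toReal • t = b * (-C') + (1 - b) * t := by
    rw [hbc]; simp [smul_eq_mul, hbdef]
  nlinarith [hbound1, hbound2, hkey, hb0, this]

/-- Algebraic characterization of contractive actions (Jaworski): a quasi-invariant action
of `G` on `(X, ν)` is contractive (every measurable set of less than full measure can be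
translated to have arbitrarily small measure) if and only if for every bounded measurable
`f`, `sup_{g ∈ G} |(gν)(f)| = ‖f‖_{L^∞(X,ν)}`, i.e. `f ↦ (g ↦ (gν)(f))` is an isometry
from `L^∞(X,ν)` into `L^∞(G)`. -/
theorem contractive_iff_isometry {G X : Type*} [Group G] [MulAction G X]
    [MeasurableSpace X]
    (ν : Measure X) [IsProbabilityMeasure ν]
    (hmeas : ∀ g : G, Measurable fun x : X => g • x)
    (hqi : ∀ g : G, ν.map (fun x : X => g • x) ≪ ν ∧ ν ≪ ν.map (fun x : X => g • x)) :
    (∀ B : Set X, MeasurableSet B → ν B < 1 → ∀ ε : ENNReal, 0 < ε →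
        ∃ g : G, ν ((fun x : X => g • x) '' B) < ε) ↔
      (∀ f : X → ℝ, Measurable f → (∃ C : ℝ, ∀ x, |f x| ≤ C) →
        (⨆ g : G, ENNReal.ofReal |∫ x, f x ∂(ν.map (fun y : X => g • y))|) =
          eLpNorm f ⊤ ν) := by
  constructor
  · -- contractivity → isometry
    rintro hcon f hf ⟨C, hC⟩
    set S : ENNReal := ⨆ g : G, ENNReal.ofReal |∫ x, f x ∂(ν.map (fun y : X => g • y))|
      with hSdef
    have hMtop : eLpNorm f ⊤ ν ≠ ⊤ := by
      refine ne_top_of_le_ne_top (b := ENNReal.ofReal C) (by simp) ?_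
      rw [eLpNorm_exponent_top]
      exact eLpNormEssSup_le_of_ae_bound
        (Filter.Eventually.of_forall fun x => by simpa [Real.norm_eq_abs] using hC x)
    refine le_antisymm ?_ ?_
    · -- S ≤ eLpNorm
      refine iSup_le fun g => ?_
      set μ : Measure X := ν.map (fun y : X => g • y) with hμdef
      haveI : IsProbabilityMeasure μ := Measure.isProbabilityMeasure_map (hmeas g).aemeasurable
      calc ENNReal.ofReal |∫ x, f x ∂μ|
          = (‖∫ x, f x ∂μ‖₊ : ENNReal) := (Real.enorm_eq_ofReal_abs _).symm
        _ ≤ ∫⁻ x, (‖f x‖₊ : ENNReal) ∂μ := enorm_integral_le_lintegral_enorm _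
        _ ≤ ∫⁻ _, eLpNormEssSup f μ ∂μ := lintegral_mono_ae ae_le_eLpNormEssSup
        _ = eLpNormEssSup f μ := by simp
        _ ≤ eLpNormEssSup f ν := essSup_mono_measure (hqi g).1
        _ = eLpNorm f ⊤ ν := eLpNorm_exponent_top.symm
    · -- eLpNorm ≤ S
      refine le_of_forall_lt_imp_le_of_dense fun c hc => ?_
      have hcfin : c ≠ ⊤ := (hc.trans hMtop.lt_top).ne
      set t : ℝ := (c.toReal + (eLpNorm f ⊤ ν).toReal) / 2 with htdef
      have hclt : c.toReal < (eLpNorm f ⊤ ν).toReal :=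
        (ENNReal.toReal_lt_toReal hcfin hMtop).2 hc
      have ht0 : 0 ≤ t := by
        have : (0:ℝ) ≤ c.toReal := ENNReal.toReal_nonneg
        rw [htdef]; linarith
      have hct : c ≤ ENNReal.ofReal t := by
        rw [← ENNReal.ofReal_toReal hcfin]
        exact ENNReal.ofReal_le_ofReal (by rw [htdef]; linarith)
      have htM : ENNReal.ofReal t < eLpNorm f ⊤ ν := by
        rw [← ENNReal.ofReal_toReal hMtop]
        refine (ENNReal.ofReal_lt_ofReal_iff ?_).2 ?_
        · have : (0:ℝ) ≤ c.toReal := ENNReal.toReal_nonneg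
          linarith
        · rw [htdef]; linarith
      have hA : 0 < ν ({x | t < f x} ∪ {x | t < -f x}) := by
        by_contra h
        push_neg at h
        have h0 : ν ({x | t < f x} ∪ {x | t < -f x}) = 0 := le_antisymm h bot_le
        have hae : ∀ᵐ x ∂ν, ‖f x‖ ≤ t := by
          rw [ae_iff]
          refine measure_mono_null ?_ h0
          intro x hx
          simp only [Set.mem_setOf_eq, not_le, Real.norm_eq_abs, lt_abs] at hx
          exact hx
        have hle : eLpNorm f ⊤ ν ≤ ENNReal.ofReal t := by
          rw [eLpNorm_exponent_top]
          exact eLpNormEssSup_le_of_ae_bound hae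
        exact absurd hle (not_le.2 htM)
      have hcase : 0 < ν {x | t < f x} ∨ 0 < ν {x | t < -f x} := by
        by_contra h
        push_neg at h
        obtain ⟨h1, h2⟩ := h
        have h1' : ν {x | t < f x} = 0 := le_antisymm h1 bot_le
        have h2' : ν {x | t < -f x} = 0 := le_antisymm h2 bot_le
        have := measure_union_null h1' h2'
        exact absurd this hA.ne'
      refine hct.trans ?_
      refine ENNReal.le_of_forall_pos_le_add fun ε hε _ => ?_
      have hεR : (0:ℝ) < (ε:ℝ) := hε
      have hwit : ∃ g : G, t - (ε:ℝ) ≤ |∫ x, f x ∂(ν.map (fun y : X => g • y))| := by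
        rcases hcase with hp | hp
        · obtain ⟨g, hg⟩ := key_translate ν hmeas hcon f hf C hC t ε ht0 hεR hp
          exact ⟨g, hg.trans (le_abs_self _)⟩
        · obtain ⟨g, hg⟩ := key_translate ν hmeas hcon (fun x => -f x) hf.neg C
            (fun x => by simpa using hC x) t ε ht0 hεR hp
          refine ⟨g, ?_⟩
          rw [integral_neg] at hg
          exact hg.trans (neg_le_abs _)
      obtain ⟨g, hg⟩ := hwit
      calc ENNReal.ofReal t = ENNReal.ofReal ((t - (ε:ℝ)) + (ε:ℝ)) := by ring_nf
        _ ≤ ENNReal.ofReal (t - (ε:ℝ)) + ENNReal.ofReal (ε:ℝ) := ENNReal.ofReal_add_le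
        _ ≤ S + (ε : ENNReal) := by
            refine add_le_add ?_ (by simp)
            refine le_trans (ENNReal.ofReal_le_ofReal hg) ?_
            exact le_iSup (fun g : G =>
              ENNReal.ofReal |∫ x, f x ∂(ν.map (fun y : X => g • y))|) g
  · -- isometry → contractivity
    intro hiso B hB hB1 ε hε
    rcases le_or_gt 1 ε with hε1 | hε1
    · refine ⟨1, ?_⟩
      have : (fun x : X => (1:G) • x) '' B = B := by simp
      rw [this]
      exact hB1.trans_le hε1
    · -- ε < 1
      set f : X → ℝ := Set.indicator Bᶜ 1 with hfdef
      have hfm : Measurable f := (measurable_const.indicator hB.compl)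
      have hfb : ∃ C : ℝ, ∀ x, |f x| ≤ C := by
        refine ⟨1, fun x => ?_⟩
        rw [hfdef]
        by_cases hx : x ∈ Bᶜ <;> simp [Set.indicator_apply, hx]
      have hBc : 0 < ν Bᶜ := by
        have hsum : ν B + ν Bᶜ = 1 := by
          rw [measure_add_measure_compl hB, measure_univ]
        by_contra h
        push_neg at h
        have h0 : ν Bᶜ = 0 := le_antisymm h bot_le
        rw [h0, add_zero] at hsum
        exact absurd hsum hB1.ne
      have hnorm : eLpNorm f ⊤ ν = 1 := by
        rw [eLpNorm_exponent_top]
        refine le_antisymm ?_ ?_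
        · refine eLpNormEssSup_le_of_ae_bound (C := 1)
            (Filter.Eventually.of_forall fun x => ?_) |>.trans (by simp)
          rw [hfdef]
          by_cases hx : x ∈ Bᶜ <;> simp [Set.indicator_apply, hx]
        · by_contra h
          push_neg at h
          have hae : ∀ᵐ x ∂ν, (‖f x‖₊ : ENNReal) ≤ eLpNormEssSup f ν :=
            ae_le_eLpNormEssSup
          have hsub : Bᶜ ⊆ {x | ¬ ((‖f x‖₊ : ENNReal) ≤ eLpNormEssSup f ν)} := by
            intro x hx
            simp only [Set.mem_setOf_eq, not_le]
            have : f x = 1 := by rw [hfdef]; simp [Set.indicator_apply, hx]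
            rw [this]
            simpa using h
          have : ν Bᶜ = 0 :=
            measure_mono_null hsub (by simpa [ae_iff] using hae)
          exact absurd this hBc.ne'
      have hsup := hiso f hfm hfb
      rw [hnorm] at hsup
      have hlt : (1 : ENNReal) - ε < ⨆ g : G,
          ENNReal.ofReal |∫ x, f x ∂(ν.map (fun y : X => g • y))| := by
        rw [hsup]
        exact ENNReal.sub_lt_self (by simp) (by simp) hε.ne'
      obtain ⟨g, hg⟩ := lt_iSup_iff.1 hlt
      set μ : Measure X := ν.map (fun y : X => g • y) with hμdef
      haveI : IsProbabilityMeasure μ := Measure.isProbabilityMeasure_map (hmeas g).aemeasurable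
      have hint : ∫ x, f x ∂μ = (μ Bᶜ).toReal := by
        rw [hfdef]
        exact integral_indicator_one hB.compl
      have habs : ENNReal.ofReal |∫ x, f x ∂μ| = μ Bᶜ := by
        rw [hint, abs_of_nonneg ENNReal.toReal_nonneg,
          ENNReal.ofReal_toReal (measure_ne_top μ Bᶜ)]
      rw [habs] at hg
      -- μ B < ε
      have hμB : μ B < ε := by
        have h1 : μ B = 1 - μ Bᶜ := by
          have := measure_compl hB.compl (measure_ne_top μ Bᶜ)
          simpa [measure_univ, compl_compl] using this
        rw [h1]
        refine ENNReal.sub_lt_of_lt_add prob_le_one ?_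
        calc (1 : ENNReal) = (1 - ε) + ε := by
              rw [tsub_add_cancel_of_le hε1.le]
          _ < μ Bᶜ + ε := by
              exact ENNReal.add_lt_add_right hε1.ne_top hg
          _ = ε + μ Bᶜ := add_comm _ _
      refine ⟨g⁻¹, ?_⟩
      have hset : (fun x : X => g⁻¹ • x) '' B = (fun y : X => g • y) ⁻¹' B := by
        ext x
        constructor
        · rintro ⟨b, hb, rfl⟩
          simpa using hb
        · intro hx
          exact ⟨g • x, hx, by simp⟩
      rw [hset, ← Measure.map_apply (hmeas g) hB]
      exact hμB
end

section
/- Let (X, ν) be a contractive G-space and (Y, η) a measure-preserving G-space. Then any joining of (X, ν) and (Y, η) for which the projection to X is relatively measure-preserving is the independent joining ν × η. -/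
open MeasureTheory
open scoped ENNReal

/-- A joining of a contractive `G`-space `(X,ν)` with a measure-preserving `G`-space
`(Y,η)` whose projection to `X` is relatively measure-preserving is the independent
joining `ν × η`. -/
theorem joining_eq_prod_of_rel_mp {G X Y : Type*} [Group G] [MulAction G X] [MulAction G Y]
    [MeasurableSpace X] [MeasurableSpace Y]
    (ν : Measure X) (η : Measure Y) [IsProbabilityMeasure ν] [IsProbabilityMeasure η]
    (hmX : ∀ g : G, Measurable fun x : X => g • x)
    (hmY : ∀ g : G, Measurable fun y : Y => g • y)
    -- `ν` is quasi-invariant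
    (hqi : ∀ g : G, ν.map (fun x : X => g • x) ≪ ν ∧ ν ≪ ν.map (fun x : X => g • x))
    -- `(X, ν)` is contractive
    (hcontr : ∀ B : Set X, MeasurableSet B → ν B < 1 → ∀ ε : ENNReal, 0 < ε →
      ∃ g : G, ν ((fun x : X => g • x) '' B) < ε)
    -- `(Y, η)` is measure-preserving
    (hη : ∀ g : G, MeasurePreserving (fun y : Y => g • y) η η)
    -- `α` is a joining of `(X,ν)` and `(Y,η)`, quasi-invariant for the diagonal action
    (α : Measure (X × Y)) [IsProbabilityMeasure α]
    (hα1 : α.map Prod.fst = ν) (hα2 : α.map Prod.snd = η)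
    (hαqi : ∀ g : G, α.map (fun p : X × Y => (g • p.1, g • p.2)) ≪ α ∧
      α ≪ α.map (fun p : X × Y => (g • p.1, g • p.2)))
    -- `D` is the disintegration of `α` over `ν` via the projection to `X`
    (D : X → Measure (X × Y)) (hDm : Measurable D)
    (hDp : ∀ x, IsProbabilityMeasure (D x))
    (hDs : ∀ᵐ x ∂ν, D x {p : X × Y | p.1 ≠ x} = 0)
    (hDb : ν.bind D = α)
    -- the projection to `X` is relatively measure-preserving: `D(gx) = gD(x)` a.e.
    (hDeq : ∀ g : G, ∀ᵐ x ∂ν,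
      D (g • x) = (D x).map (fun p : X × Y => (g • p.1, g • p.2))) :
    α = ν.prod η := by
  classical
  have hνuniv : ν Set.univ = 1 := measure_univ
  have hfmeas : ∀ C : Set (X × Y), MeasurableSet C → Measurable (fun x => D x C) :=
    fun C hC => (Measure.measurable_coe hC).comp hDm
  -- the integral of the fibre measure of a vertical strip is `η` of its base
  have hint : ∀ C : Set Y, MeasurableSet C →
      ∫⁻ x, D x (Prod.snd ⁻¹' C) ∂ν = η C := by
    intro C hC
    have h1 : ν.bind D (Prod.snd ⁻¹' C) = ∫⁻ x, D x (Prod.snd ⁻¹' C) ∂ν :=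
      Measure.bind_apply (measurable_snd hC) hDm.aemeasurable
    rw [← h1, hDb, ← hα2, Measure.map_apply measurable_snd hC]
  -- key estimate: fibrewise measures of strips are a.e. at most their `η`-measure
  have hle : ∀ A : Set Y, MeasurableSet A →
      ∀ᵐ x ∂ν, D x (Prod.snd ⁻¹' A) ≤ η A := by
    intro A hA
    by_contra hcon
    have hpos : ν {x | η A < D x (Prod.snd ⁻¹' A)} ≠ 0 := by
      intro h0
      exact hcon (ae_iff.mpr (by simpa [not_le] using h0))
    have hsub : {x | η A < D x (Prod.snd ⁻¹' A)} ⊆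
        ⋃ n : ℕ, {x | η A + ((n : ℝ≥0∞))⁻¹ ≤ D x (Prod.snd ⁻¹' A)} := by
      intro x hx
      obtain ⟨n, hn⟩ := ENNReal.exists_inv_nat_lt (tsub_pos_of_lt hx).ne'
      refine Set.mem_iUnion.mpr ⟨n, ?_⟩
      calc η A + (n : ℝ≥0∞)⁻¹
          ≤ η A + (D x (Prod.snd ⁻¹' A) - η A) := add_le_add_right hn.le _
        _ = D x (Prod.snd ⁻¹' A) := add_tsub_cancel_of_le hx.le
    have hex : ∃ n : ℕ, ν {x | η A + (n : ℝ≥0∞)⁻¹ ≤ D x (Prod.snd ⁻¹' A)} ≠ 0 := by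
      by_contra h
      push_neg at h
      exact hpos (le_antisymm
        (le_trans (measure_mono hsub) (le_of_eq (measure_iUnion_null h))) zero_le)
    obtain ⟨n, hn⟩ := hex
    set δ : ℝ≥0∞ := (n : ℝ≥0∞)⁻¹ with hδdef
    have hδ0 : δ ≠ 0 := ENNReal.inv_ne_zero.mpr (ENNReal.natCast_ne_top n)
    set S := {x | η A + δ ≤ D x (Prod.snd ⁻¹' A)} with hSdef
    have hSm : MeasurableSet S :=
      measurableSet_le measurable_const (hfmeas _ (measurable_snd hA))
    -- the bound `η A + δ` is at most `1`
    have hSne : S.Nonempty :=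
      Set.nonempty_iff_ne_empty.mpr fun h => hn (by rw [h, measure_empty])
    have hb1 : η A + δ ≤ 1 := by
      obtain ⟨x₀, hx₀⟩ := hSne
      exact hx₀.trans prob_le_one
    have hBlt : ν Sᶜ < 1 := by
      rw [measure_compl hSm (measure_ne_top ν S), hνuniv]
      exact ENNReal.sub_lt_self ENNReal.one_ne_top one_ne_zero hn
    -- the contraction estimate
    have hmain : ∀ ε : ℝ≥0∞, 0 < ε → η A + δ ≤ η A + (η A + δ) * ε := by
      intro ε hε
      obtain ⟨g, hg⟩ := hcontr Sᶜ hSm.compl hBlt ε hε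
      have himg : (fun x : X => g • x) '' Sᶜ = (fun x : X => g⁻¹ • x) ⁻¹' Sᶜ := by
        ext x
        constructor
        · rintro ⟨b, hb, rfl⟩; simpa using hb
        · intro hx; exact ⟨g⁻¹ • x, hx, by simp⟩
      set T := (fun x : X => g⁻¹ • x) ⁻¹' S with hTdef
      have hTm : MeasurableSet T := hmX g⁻¹ hSm
      have hT : 1 - ε ≤ ν T := by
        have h1 : ν Tᶜ < ε := by
          have hTc : Tᶜ = (fun x : X => g⁻¹ • x) ⁻¹' Sᶜ := rfl
          rw [hTc, ← himg]; exact hg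
        have h2 : ν T = 1 - ν Tᶜ := by
          rw [measure_compl hTm (measure_ne_top _ _), hνuniv,
            ENNReal.sub_sub_cancel ENNReal.one_ne_top prob_le_one]
        rw [h2]
        exact tsub_le_tsub_left h1.le 1
      have hA' : MeasurableSet ((fun y : Y => g⁻¹ • y) ⁻¹' A) := hmY g⁻¹ hA
      have hηA' : η ((fun y : Y => g⁻¹ • y) ⁻¹' A) = η A :=
        (hη g⁻¹).measure_preimage hA.nullMeasurableSet
      have hφm : Measurable (fun p : X × Y => (g⁻¹ • p.1, g⁻¹ • p.2)) :=
        ((hmX g⁻¹).comp measurable_fst).prodMk ((hmY g⁻¹).comp measurable_snd)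
      have haex : ∀ᵐ x ∂ν, x ∈ T →
          η A + δ ≤ D x (Prod.snd ⁻¹' ((fun y : Y => g⁻¹ • y) ⁻¹' A)) := by
        filter_upwards [hDeq g⁻¹] with x hx hxT
        have heq : D x (Prod.snd ⁻¹' ((fun y : Y => g⁻¹ • y) ⁻¹' A))
            = D (g⁻¹ • x) (Prod.snd ⁻¹' A) := by
          rw [hx, Measure.map_apply hφm (measurable_snd hA)]
          rfl
        rw [heq]
        exact hxT
      have hchain : (η A + δ) * ν T ≤ η A := by
        calc (η A + δ) * ν T
            = ∫⁻ _ in T, (η A + δ) ∂ν := by rw [setLIntegral_const]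
          _ ≤ ∫⁻ x in T, D x (Prod.snd ⁻¹' ((fun y : Y => g⁻¹ • y) ⁻¹' A)) ∂ν :=
              lintegral_mono_ae ((ae_restrict_iff' hTm).mpr haex)
          _ ≤ ∫⁻ x, D x (Prod.snd ⁻¹' ((fun y : Y => g⁻¹ • y) ⁻¹' A)) ∂ν :=
              setLIntegral_le_lintegral _ _
          _ = η ((fun y : Y => g⁻¹ • y) ⁻¹' A) := hint _ hA'
          _ = η A := hηA'
      calc η A + δ = (η A + δ) * 1 := (mul_one _).symm
        _ ≤ (η A + δ) * ((1 - ε) + ε) := mul_le_mul_right le_tsub_add _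
        _ = (η A + δ) * (1 - ε) + (η A + δ) * ε := by rw [mul_add]
        _ ≤ (η A + δ) * ν T + (η A + δ) * ε := add_le_add_left (mul_le_mul_right hT _) _
        _ ≤ η A + (η A + δ) * ε := add_le_add_left hchain _
    have hfinal : η A + δ ≤ η A := by
      refine ENNReal.le_of_forall_pos_le_add ?_
      intro ε hε _
      calc η A + δ ≤ η A + (η A + δ) * (ε : ℝ≥0∞) :=
            hmain _ (ENNReal.coe_pos.mpr hε)
        _ ≤ η A + 1 * (ε : ℝ≥0∞) := add_le_add_right (mul_le_mul_left hb1 _) _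
        _ = η A + ε := by rw [one_mul]
    exact (ENNReal.lt_add_right (measure_ne_top η A) hδ0).not_ge hfinal
  -- hence fibrewise measures of strips are a.e. equal to their `η`-measure
  have heqA : ∀ A : Set Y, MeasurableSet A →
      ∀ᵐ x ∂ν, D x (Prod.snd ⁻¹' A) = η A := by
    intro A hA
    filter_upwards [hle A hA, hle Aᶜ hA.compl] with x h1 h2
    haveI := hDp x
    have hsum : D x (Prod.snd ⁻¹' A) + D x (Prod.snd ⁻¹' Aᶜ) = 1 := by
      have hc : (Prod.snd ⁻¹' Aᶜ : Set (X × Y)) = (Prod.snd ⁻¹' A)ᶜ := rfl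
      rw [hc, measure_add_measure_compl (measurable_snd hA), measure_univ]
    have hηsum : η A + η Aᶜ = 1 := by rw [measure_add_measure_compl hA, measure_univ]
    have h3 : η A + η Aᶜ ≤ D x (Prod.snd ⁻¹' A) + η Aᶜ := by
      rw [hηsum, ← hsum]
      exact add_le_add_right h2 _
    exact le_antisymm h1 ((ENNReal.add_le_add_iff_right (measure_ne_top η Aᶜ)).mp h3)
  -- compute `α` on rectangles
  have hrect : ∀ (s : Set X) (t : Set Y), MeasurableSet s → MeasurableSet t →
      α (s ×ˢ t) = ν s * η t := by
    intro B A hB hA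
    have h1 : α (B ×ˢ A) = ∫⁻ x, D x (B ×ˢ A) ∂ν := by
      rw [← hDb]; exact Measure.bind_apply (hB.prod hA) hDm.aemeasurable
    have h2 : ∀ᵐ x ∂ν, D x (B ×ˢ A) = B.indicator (fun _ => η A) x := by
      filter_upwards [hDs, heqA A hA] with x hx hxA
      by_cases hxB : x ∈ B
      · rw [Set.indicator_of_mem hxB]
        refine le_antisymm (hxA ▸ measure_mono (fun p hp => hp.2)) ?_
        have hsub2 : Prod.snd ⁻¹' A ⊆ (B ×ˢ A) ∪ {p : X × Y | p.1 ≠ x} := by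
          intro p hp
          by_cases hpx : p.1 = x
          · exact Or.inl ⟨hpx ▸ hxB, hp⟩
          · exact Or.inr hpx
        calc η A = D x (Prod.snd ⁻¹' A) := hxA.symm
          _ ≤ D x ((B ×ˢ A) ∪ {p : X × Y | p.1 ≠ x}) := measure_mono hsub2
          _ ≤ D x (B ×ˢ A) + D x {p : X × Y | p.1 ≠ x} := measure_union_le _ _
          _ = D x (B ×ˢ A) := by rw [hx, add_zero]
      · rw [Set.indicator_of_notMem hxB]
        refine le_antisymm ?_ zero_le
        refine le_trans (measure_mono ?_) hx.le
        intro p hp h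
        exact hxB (h ▸ hp.1)
    calc α (B ×ˢ A) = ∫⁻ x, D x (B ×ˢ A) ∂ν := h1
      _ = ∫⁻ x, B.indicator (fun _ => η A) x ∂ν := lintegral_congr_ae h2
      _ = η A * ν B := by rw [lintegral_indicator hB, setLIntegral_const]
      _ = ν B * η A := mul_comm _ _
  exact (Measure.prod_eq hrect).symm
end

section
/- Every proper open subgroup of a noncompact locally compact group with the Howe-Moore property is compact. -/
open Filter

/-- A topological group has the Howe-Moore property if every continuous unitary
representation with no nonzero invariant vectors has matrix coefficients vanishing at
infinity. -/
def HoweMoore (G : Type*) [Group G] [TopologicalSpace G] : Prop :=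
  ∀ (H : Type) [NormedAddCommGroup H] [InnerProductSpace ℂ H] [CompleteSpace H]
    (π : G →* (H ≃ₗᵢ[ℂ] H)),
    (∀ v : H, Continuous fun g : G => π g v) →
    (∀ v : H, (∀ g : G, π g v = v) → v = 0) →
    ∀ v w : H, Tendsto (fun g : G => (inner ℂ (π g v) w : ℂ)) (cocompact G) (nhds 0)

set_option linter.unusedSectionVars false

set_option maxHeartbeats 2000000
noncomputable section HMAux

variable {I : Type} [DecidableEq I]

/-- The linear isometry equivalence of `ℓ²(I)` induced by a permutation of `I`. -/
def lpPerm (e : Equiv.Perm I) :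
    lp (fun _ : I => ℂ) 2 ≃ₗᵢ[ℂ] lp (fun _ : I => ℂ) 2 :=
  { toLinearEquiv :=
    { toFun := fun f => ⟨fun i => f (e.symm i), by
        apply memℓp_gen
        exact (Equiv.summable_iff e.symm).2 ((lp.memℓp f).summable (by norm_num))⟩
      invFun := fun f => ⟨fun i => f (e i), by
        apply memℓp_gen
        exact (Equiv.summable_iff e).2 ((lp.memℓp f).summable (by norm_num))⟩
      left_inv := fun f => lp.ext (funext fun i => by simp)
      right_inv := fun f => lp.ext (funext fun i => by simp)
      map_add' := fun f g => lp.ext (funext fun i => by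
        simp [lp.coeFn_add, Pi.add_apply]
        rfl)
      map_smul' := fun c f => lp.ext (funext fun i => by
        simp [lp.coeFn_smul, Pi.smul_apply]) }
    norm_map' := fun f => by
      have h2 : 0 < (2 : ENNReal).toReal := by norm_num
      rw [lp.norm_eq_tsum_rpow h2, lp.norm_eq_tsum_rpow h2]
      congr 1
      exact e.symm.tsum_eq (fun i => ‖f i‖ ^ (2 : ENNReal).toReal) }

@[simp] lemma lpPerm_apply (e : Equiv.Perm I) (f : lp (fun _ : I => ℂ) 2) (i : I) :
    (lpPerm e f : ∀ _ : I, ℂ) i = f (e.symm i) := rfl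

lemma lpPerm_single (e : Equiv.Perm I) (i : I) (a : ℂ) :
    lpPerm e (lp.single 2 i a) = lp.single 2 (e i) a := by
  refine lp.ext (funext fun j => ?_)
  rw [lpPerm_apply, lp.single_apply, lp.single_apply]
  by_cases h : j = e i
  · subst h
    simp
  · rw [Pi.single_apply, Pi.single_apply, if_neg (fun hj => h (by rw [← hj, e.apply_symm_apply])), if_neg h]



variable {G : Type*} [Group G]

/-- The unitary representation of `G` on `ℓ²(I)` induced by `ρ : G →* Perm I`. -/
def lpRep (ρ : G →* Equiv.Perm I) :
    G →* (lp (fun _ : I => ℂ) 2 ≃ₗᵢ[ℂ] lp (fun _ : I => ℂ) 2) where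
  toFun g := lpPerm (ρ g)
  map_one' := by
    refine LinearIsometryEquiv.ext fun f => lp.ext (funext fun i => ?_)
    simp
    rfl
  map_mul' g h := by
    refine LinearIsometryEquiv.ext fun f => lp.ext (funext fun i => ?_)
    show f ((ρ (g * h)).symm i) = f ((ρ h).symm ((ρ g).symm i))
    rw [map_mul]; rfl

lemma lpRep_apply (ρ : G →* Equiv.Perm I) (g : G) (f : lp (fun _ : I => ℂ) 2) :
    lpRep ρ g f = lpPerm (ρ g) f := rfl

section Invariant

variable {E : Type*} [NormedAddCommGroup E] [InnerProductSpace ℂ E]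

/-- The submodule of invariant vectors of a unitary representation. -/
def invSub (π : G →* (E ≃ₗᵢ[ℂ] E)) : Submodule ℂ E where
  carrier := {f | ∀ g : G, π g f = f}
  add_mem' := fun {a b} ha hb g => by rw [map_add, ha g, hb g]
  zero_mem' := fun g => map_zero _
  smul_mem' := fun c f hf g => by rw [map_smul, hf g]

lemma mem_invSub {π : G →* (E ≃ₗᵢ[ℂ] E)} {f : E} :
    f ∈ invSub π ↔ ∀ g : G, π g f = f := Iff.rfl

lemma isClosed_invSub (π : G →* (E ≃ₗᵢ[ℂ] E)) : IsClosed ((invSub π : Submodule ℂ E) : Set E) := by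
  have : ((invSub π : Submodule ℂ E) : Set E) = ⋂ g : G, {f : E | π g f = f} := by
    ext f
    simp [mem_invSub, Set.mem_iInter]
  rw [this]
  exact isClosed_iInter fun g => isClosed_eq (π g).continuous continuous_id

lemma rep_apply_mem_orthogonal_invSub (π : G →* (E ≃ₗᵢ[ℂ] E)) (g : G) {x : E}
    (hx : x ∈ (invSub π)ᗮ) : π g x ∈ (invSub π)ᗮ := by
  refine (Submodule.mem_orthogonal _ _).2 fun u hu => ?_
  calc (inner ℂ u (π g x) : ℂ) = inner ℂ (π g u) (π g x) := by rw [hu g]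
    _ = inner ℂ u x := (π g).inner_map_map u x
    _ = 0 := (Submodule.mem_orthogonal _ _).1 hx u hu

lemma rep_mul_apply (π : G →* (E ≃ₗᵢ[ℂ] E)) (a b : G) (v : E) :
    π a (π b v) = π (a * b) v := by rw [map_mul]; rfl

/-- The restriction of a unitary representation to the orthogonal complement of the
invariant vectors. -/
def restrictRep (π : G →* (E ≃ₗᵢ[ℂ] E)) :
    G →* ((↥((invSub π)ᗮ)) ≃ₗᵢ[ℂ] (↥((invSub π)ᗮ))) where
  toFun g :=
    { toLinearEquiv :=
      { toFun := fun x => ⟨π g x, rep_apply_mem_orthogonal_invSub π g x.2⟩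
        invFun := fun x => ⟨π g⁻¹ x, rep_apply_mem_orthogonal_invSub π g⁻¹ x.2⟩
        left_inv := fun x => Subtype.ext (by
          simp [rep_mul_apply π g⁻¹ g])
        right_inv := fun x => Subtype.ext (by
          simp [rep_mul_apply π g g⁻¹])
        map_add' := fun x y => Subtype.ext (by simp)
        map_smul' := fun c x => Subtype.ext (by simp) }
      norm_map' := fun x => by
        show ‖π g (x : E)‖ = ‖(x : E)‖
        exact (π g).norm_map _ }
  map_one' := by
    refine LinearIsometryEquiv.ext fun x => Subtype.ext ?_
    simp
  map_mul' g h := by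
    refine LinearIsometryEquiv.ext fun x => Subtype.ext ?_
    show π (g * h) (x : E) = π g (π h (x : E))
    rw [rep_mul_apply]

lemma restrictRep_coe (π : G →* (E ≃ₗᵢ[ℂ] E)) (g : G) (x : ↥((invSub π)ᗮ)) :
    ((restrictRep π g x : ↥((invSub π)ᗮ)) : E) = π g (x : E) := rfl

lemma coeff_eq (π : G →* (E ≃ₗᵢ[ℂ] E)) [Submodule.HasOrthogonalProjection (invSub π)] (g : G) (δ : E) :
    (inner ℂ (π g (δ - Submodule.orthogonalProjectionOnto (invSub π) δ))
        (δ - Submodule.orthogonalProjectionOnto (invSub π) δ) : ℂ)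
      = (inner ℂ (π g δ) δ : ℂ)
        - inner ℂ ((Submodule.orthogonalProjectionOnto (invSub π) δ : E)) ((Submodule.orthogonalProjectionOnto (invSub π) δ : E)) := by
  set q : E := (Submodule.orthogonalProjectionOnto (invSub π) δ : E) with hq
  have hqV : q ∈ invSub π := (Submodule.orthogonalProjectionOnto (invSub π) δ).2
  have h1 : π g q = q := hqV g
  have h2 : (inner ℂ (π g δ) q : ℂ) = inner ℂ δ q := by
    conv_lhs => rw [← h1]
    exact (π g).inner_map_map δ q
  have h3 : (inner ℂ (δ - q) q : ℂ) = 0 := Submodule.starProjection_inner_eq_zero δ q hqV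
  have h4 : (inner ℂ δ q : ℂ) = inner ℂ q q := by
    rw [inner_sub_left] at h3
    linear_combination h3
  have h5 : (inner ℂ q δ : ℂ) = inner ℂ q q := by
    rw [← inner_conj_symm, h4, inner_conj_symm]
  rw [map_sub, h1, inner_sub_left, inner_sub_right, inner_sub_right, h2, h4, h5]
  ring

end Invariant

end HMAux


/-- Every proper open subgroup of a noncompact locally compact group with the Howe-Moore
property is compact. -/
theorem proper_open_subgroup_compact {G : Type*} [Group G] [TopologicalSpace G]
    [IsTopologicalGroup G] [LocallyCompactSpace G] [SecondCountableTopology G]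
    (hnc : ¬ CompactSpace G) (hHM : HoweMoore G)
    (U : Subgroup G) (hUo : IsOpen (U : Set G)) (hUp : U ≠ ⊤) :
    IsCompact (U : Set G) := by
  classical
  -- The quotient is countable
  obtain ⟨D, hDc, hDd⟩ := TopologicalSpace.exists_countable_dense G
  have hQc : Countable (G ⧸ U) := by
    haveI : Countable D := hDc.to_subtype
    refine Function.Surjective.countable (f := fun d : D => ((d : G) : G ⧸ U)) fun q => ?_
    obtain ⟨a, rfl⟩ := QuotientGroup.mk_surjective q
    have hS : IsOpen ((fun x => a⁻¹ * x) ⁻¹' (U : Set G)) :=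
      hUo.preimage (continuous_const.mul continuous_id)
    have hSne : ((fun x => a⁻¹ * x) ⁻¹' (U : Set G)).Nonempty :=
      ⟨a, by simpa using U.one_mem⟩
    obtain ⟨d, hd1, hd2⟩ := hDd.inter_open_nonempty _ hS hSne
    exact ⟨⟨d, hd2⟩, (QuotientGroup.eq.2 hd1).symm⟩
  obtain ⟨φ, hφ⟩ := countable_iff_exists_injective (G ⧸ U) |>.1 hQc
  set I : Type := ↥(Set.range φ) with hI
  let ε : (G ⧸ U) ≃ I := Equiv.ofInjective φ hφ
  -- the permutation representation of G on I
  let ρ : G →* Equiv.Perm I :=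
  { toFun := fun g => (ε.symm.trans (MulAction.toPerm g)).trans ε
    map_one' := Equiv.ext fun i => by simp
    map_mul' := fun g h => Equiv.ext fun i => by
      simp [mul_smul, Equiv.Perm.mul_apply] }
  have hρ : ∀ (g : G) (i : I), ρ g i = ε (g • ε.symm i) := fun g i => rfl
  set π := lpRep ρ with hπ
  -- continuity of the representation
  have hlps : ∀ (q : G ⧸ U) (g₀ : G), IsOpen {g : G | g • q = g₀ • q} := by
    intro q g₀
    obtain ⟨a, rfl⟩ := QuotientGroup.mk_surjective q
    have : {g : G | g • ((a : G ⧸ U)) = g₀ • (a : G ⧸ U)}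
        = (fun g => (g * a)⁻¹ * (g₀ * a)) ⁻¹' (U : Set G) := by
      ext g
      simp only [Set.mem_setOf_eq, Set.mem_preimage, SetLike.mem_coe]
      exact QuotientGroup.eq
    rw [this]
    exact hUo.preimage (by fun_prop)
  have hcont : ∀ v : lp (fun _ : I => ℂ) 2, Continuous fun g : G => π g v := by
    intro v
    rw [continuous_iff_continuousAt]
    intro g₀
    refine Metric.tendsto_nhds.2 fun ep hep => ?_
    have hsum := lp.hasSum_single (E := fun _ : I => ℂ) (by norm_num : (2 : ENNReal) ≠ ⊤) v
    obtain ⟨s, hs⟩ : ∃ s : Finset I, dist (∑ i ∈ s, lp.single 2 i (v i)) v < ep / 3 :=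
      ((Metric.tendsto_nhds.1 hsum (ep / 3) (by linarith)).exists)
    set v' := ∑ i ∈ s, lp.single 2 i (v i) with hv'def
    have hWopen : IsOpen {g : G | ∀ i ∈ s, ρ g i = ρ g₀ i} := by
      have : {g : G | ∀ i ∈ s, ρ g i = ρ g₀ i}
          = ⋂ i ∈ s, {g : G | g • (ε.symm i) = g₀ • (ε.symm i)} := by
        ext g
        simp only [Set.mem_setOf_eq, Set.mem_iInter]
        refine forall₂_congr fun i hi => ?_
        rw [hρ, hρ]
        exact ⟨fun h => ε.injective.eq_iff.1 h, fun h => by rw [h]⟩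
      rw [this]
      exact Set.Finite.isOpen_biInter s.finite_toSet fun i _ => hlps _ _
    have hg₀W : g₀ ∈ {g : G | ∀ i ∈ s, ρ g i = ρ g₀ i} := fun i _ => rfl
    filter_upwards [hWopen.mem_nhds hg₀W] with g hg
    have hv' : π g v' = π g₀ v' := by
      rw [hv'def, map_sum, map_sum]
      refine Finset.sum_congr rfl fun i hi => ?_
      rw [hπ, lpRep_apply, lpRep_apply, lpPerm_single, lpPerm_single, hg i hi]
    calc dist (π g v) (π g₀ v)
        ≤ dist (π g v) (π g v') + dist (π g v') (π g₀ v') + dist (π g₀ v') (π g₀ v) :=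
          dist_triangle4 _ _ _ _
      _ = dist v v' + 0 + dist v' v := by
          rw [(π g).dist_map, (π g₀).dist_map, hv', dist_self]
      _ < ep := by
          rw [dist_comm v v'] at *
          linarith
  -- the invariant subspace and the restricted representation
  set V : Submodule ℂ (lp (fun _ : I => ℂ) 2) := invSub π with hV
  haveI : CompleteSpace V := (isClosed_invSub π).completeSpace_coe
  set π' := restrictRep π with hπ'
  -- base point
  set i₀ : I := ε ((1 : G) : G ⧸ U) with hi₀
  set δ : lp (fun _ : I => ℂ) 2 := lp.single 2 i₀ 1 with hδdef
  have hfix : ∀ g : G, ρ g i₀ = i₀ ↔ g ∈ U := by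
    intro g
    rw [hρ, hi₀, Equiv.symm_apply_apply, ε.injective.eq_iff]
    show (((g * 1 : G) : G ⧸ U)) = ((1 : G) : G ⧸ U) ↔ g ∈ U
    rw [mul_one]
    exact QuotientGroup.eq.trans (by simp)
  have hπδ : ∀ g : G, π g δ = lp.single 2 (ρ g i₀) 1 := fun g => by
    rw [hδdef, hπ, lpRep_apply, lpPerm_single]
  have hinner : ∀ g : G, (inner ℂ (π g δ) δ : ℂ) = if g ∈ U then 1 else 0 := by
    intro g
    rw [hπδ g, hδdef, lp.inner_single_left]
    by_cases h : g ∈ U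
    · rw [if_pos h, (hfix g).2 h, lp.single_apply_self]
      simp
    · rw [if_neg h, lp.single_apply_ne _ _ _ (fun hc => h ((hfix g).1 hc))]
      simp

  -- the distinguished vector in the orthogonal complement
  set P := Submodule.orthogonalProjectionOnto V with hPdef
  set q : lp (fun _ : I => ℂ) 2 := (P δ : lp (fun _ : I => ℂ) 2) with hqdef
  have hq_mem : q ∈ invSub π := (P δ).2
  have hvmem : δ - q ∈ (invSub π)ᗮ := Submodule.sub_starProjection_mem_orthogonal (K := invSub π) δ
  set v : ↥((invSub π)ᗮ) := ⟨δ - q, hvmem⟩ with hvdef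
  -- no nonzero invariant vectors in the complement
  have hinv : ∀ x : ↥((invSub π)ᗮ), (∀ g : G, π' g x = x) → x = 0 := by
    intro x hx
    have hxV : (x : lp (fun _ : I => ℂ) 2) ∈ invSub π := fun g =>
      congrArg Subtype.val (hx g)
    have h0 : (inner ℂ (x : lp (fun _ : I => ℂ) 2) (x : lp (fun _ : I => ℂ) 2) : ℂ) = 0 :=
      (Submodule.mem_orthogonal _ _).1 x.2 _ hxV
    exact Subtype.ext (inner_self_eq_zero.1 h0)
  have hcont' : ∀ x : ↥((invSub π)ᗮ), Continuous fun g : G => π' g x := fun x =>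
    (hcont (x : lp (fun _ : I => ℂ) 2)).subtype_mk _
  have hHMres := hHM (↥((invSub π)ᗮ)) π' hcont' hinv v v
  -- compute the matrix coefficient
  have hcoeff : ∀ g : G, (inner ℂ (π' g v) v : ℂ)
      = (if g ∈ U then (1:ℂ) else 0) - inner ℂ q q := by
    intro g
    have h1 : (inner ℂ (π' g v) v : ℂ) = inner ℂ (π g (δ - q)) (δ - q) :=
      Submodule.coe_inner _ _ _
    rw [h1]
    have h2 := coeff_eq π g δ
    rw [h2, hinner g]
  have hδnorm : ‖δ‖ = 1 := by
    rw [hδdef]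
    simpa using lp.norm_single (p := 2) (by norm_num) (fun _ : I => (1:ℂ)) i₀
  have horth : (inner ℂ q (δ - q) : ℂ) = 0 :=
    (Submodule.mem_orthogonal _ _).1 hvmem q hq_mem
  have hpyth : ‖q‖ ^ 2 + ‖δ - q‖ ^ 2 = 1 := by
    have h := norm_add_sq_eq_norm_sq_add_norm_sq_of_inner_eq_zero q (δ - q) horth
    have hx : q + (δ - q) = δ := by abel
    rw [hx, hδnorm] at h
    linarith
  have hδq_ne : δ - q ≠ 0 := by
    intro h0
    have hδV : δ ∈ invSub π := by
      have hδq : δ = q := by rwa [sub_eq_zero] at h0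
      rw [hδq]; exact hq_mem
    obtain ⟨g, hgU⟩ : ∃ g : G, g ∉ U := by
      by_contra hno; push_neg at hno
      exact hUp ((Subgroup.eq_top_iff' U).2 hno)
    have h1 : π g δ = δ := hδV g
    rw [hπδ g] at h1
    have hne : i₀ ≠ ρ g i₀ := fun hcon => hgU ((hfix g).1 hcon.symm)
    have h2 : (lp.single 2 ((ρ g) i₀) (1:ℂ) : ∀ _ : I, ℂ) i₀
        = (lp.single 2 i₀ (1:ℂ) : ∀ _ : I, ℂ) i₀ := by rw [h1]
    rw [lp.single_apply_ne _ _ _ hne, lp.single_apply_self] at h2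
    exact zero_ne_one h2
  set c : ℝ := ‖q‖ ^ 2 with hcdef
  have ht0 : 0 ≤ c := sq_nonneg _
  have ht1 : c < 1 := by
    have hpos : 0 < ‖δ - q‖ ^ 2 := pow_pos (norm_pos_iff.2 hδq_ne) 2
    linarith
  have hself : (inner ℂ q q : ℂ) = (c : ℂ) := by
    rw [inner_self_eq_norm_sq_to_K, hcdef]
    norm_cast
  have hfun : (fun g : G => (inner ℂ (π' g v) v : ℂ))
      = fun g : G => (if g ∈ U then (1:ℂ) else 0) - (c : ℂ) := by
    funext g
    rw [hcoeff g, hself]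
  rw [hfun] at hHMres
  have hnorm : ∀ g : G, ‖(if g ∈ U then (1:ℂ) else 0) - (c:ℂ)‖
      = if g ∈ U then 1 - c else c := by
    intro g
    by_cases h : g ∈ U
    · rw [if_pos h, if_pos h]
      have hcast : (1:ℂ) - (c:ℂ) = ((1 - c : ℝ) : ℂ) := by push_cast; ring
      rw [hcast, Complex.norm_real, Real.norm_eq_abs, abs_of_nonneg (by linarith)]
    · rw [if_neg h, if_neg h]
      have hcast : (0:ℂ) - (c:ℂ) = ((-c : ℝ) : ℂ) := by push_cast; ring
      rw [hcast, Complex.norm_real, Real.norm_eq_abs, abs_neg, abs_of_nonneg ht0]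
  by_cases hc0 : c = 0
  · -- the subgroup is contained in a compact set
    have h12 := Metric.tendsto_nhds.1 hHMres (1/2) (by norm_num)
    rw [eventually_iff, mem_cocompact] at h12
    obtain ⟨C, hCc, hCsub⟩ := h12
    refine hCc.of_isClosed_subset (U.isClosed_of_isOpen hUo) ?_
    intro g hgU0
    have hgU : g ∈ U := hgU0
    by_contra hgC
    have hlt := hCsub hgC
    simp only [Set.mem_setOf_eq] at hlt
    rw [dist_zero_right, hnorm g, if_pos hgU, hc0] at hlt
    norm_num at hlt
  · -- otherwise the whole group is compact, contradiction
    have hcpos : 0 < c := lt_of_le_of_ne ht0 (Ne.symm hc0)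
    have hmpos : 0 < min c (1 - c) := lt_min hcpos (by linarith)
    have hev := Metric.tendsto_nhds.1 hHMres (min c (1 - c)) hmpos
    rw [eventually_iff, mem_cocompact] at hev
    obtain ⟨C, hCc, hCsub⟩ := hev
    exfalso
    apply hnc
    rw [← isCompact_univ_iff]
    have hCuniv : C = Set.univ := by
      rw [Set.eq_univ_iff_forall]
      intro g
      by_contra hgC
      have hlt := hCsub hgC
      simp only [Set.mem_setOf_eq] at hlt
      rw [dist_zero_right, hnorm g] at hlt
      by_cases h : g ∈ U
      · rw [if_pos h] at hlt
        have := min_le_right c (1 - c)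
        linarith
      · rw [if_neg h] at hlt
        have := min_le_left c (1 - c)
        linarith
    rwa [hCuniv] at hCc
end
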